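/- The kernel reflection polynomial K_{1/kappa, l}(x) = (2*T_l((-2*kappa^2*x^2 + kappa^2 + 1)/(kappa^2 - 1)) + 2)/(T_l((kappa^2+1)/(kappa^2-1)) + 1) - 1 satisfies |K_{1/kappa,l}(x)| <= 1 for all x in [-1, 1], where T_l is the l-th Chebyshev polynomial of the first kind and kappa > 1. -/
import Mathlib

open Polynomial

lemma T_real_cosh (t : ℝ) (n : ℤ) :
    (Polynomial.Chebyshev.T ℝ n).eval (Real.cosh t) = Real.cosh (n * t) := by
  have h := Polynomial.Chebyshev.T_complex_cos ((t : ℂ) * Complex.I) n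
  rw [Complex.cos_mul_I] at h
  have h2 : (n : ℂ) * ((t : ℂ) * Complex.I) = ((n * t : ℝ) : ℂ) * Complex.I := by
    push_cast; ring
  rw [h2, Complex.cos_mul_I] at h
  exact_mod_cast h

lemma exists_cosh {b : ℝ} (hb : 1 ≤ b) : ∃ t : ℝ, 0 ≤ t ∧ Real.cosh t = b := by
  set u : ℝ := b + Real.sqrt (b ^ 2 - 1) with hu
  have hs : Real.sqrt (b ^ 2 - 1) ^ 2 = b ^ 2 - 1 := by
    rw [sq, Real.mul_self_sqrt]; nlinarith
  have hsnn : 0 ≤ Real.sqrt (b ^ 2 - 1) := Real.sqrt_nonneg _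
  have hu1 : 1 ≤ u := by nlinarith
  have hupos : 0 < u := by linarith
  refine ⟨Real.log u, Real.log_nonneg hu1, ?_⟩
  rw [Real.cosh_eq, Real.exp_log hupos, Real.exp_neg, Real.exp_log hupos]
  field_simp
  nlinarith

lemma T_mono {a b : ℝ} (ha : 1 ≤ a) (hab : a ≤ b) (l : ℕ) :
    1 ≤ (Polynomial.Chebyshev.T ℝ l).eval a ∧
    (Polynomial.Chebyshev.T ℝ l).eval a ≤ (Polynomial.Chebyshev.T ℝ l).eval b := by
  obtain ⟨s, hs0, hs⟩ := exists_cosh ha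
  obtain ⟨t, ht0, ht⟩ := exists_cosh (ha.trans hab)
  have hst : s ≤ t := by
    have h3 : Real.cosh s ≤ Real.cosh t := by rw [hs, ht]; exact hab
    have := Real.cosh_le_cosh.mp h3
    rwa [abs_of_nonneg hs0, abs_of_nonneg ht0] at this
  rw [← hs, ← ht, T_real_cosh, T_real_cosh]
  constructor
  · exact Real.one_le_cosh _
  · apply Real.cosh_le_cosh.mpr
    have hl : (0 : ℝ) ≤ (l : ℤ) := by positivity
    rw [abs_of_nonneg (by positivity), abs_of_nonneg (by positivity)]
    exact mul_le_mul_of_nonneg_left hst hl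

/-- The kernel reflection polynomial
`K_{1/κ, l}(x) = (2 T_l((-2κ²x² + κ² + 1)/(κ² - 1)) + 2)/(T_l((κ²+1)/(κ²-1)) + 1) - 1`
satisfies `|K_{1/κ,l}(x)| ≤ 1` for all `x ∈ [-1, 1]`, where `T_l` is the `l`-th
Chebyshev polynomial of the first kind and `κ > 1`, `l ≥ 1`. -/
theorem kernel_reflection_polynomial_bounded (κ : ℝ) (hκ : 1 < κ) (l : ℕ) (hl : 0 < l)
    (x : ℝ) (hx : x ∈ Set.Icc (-1 : ℝ) 1) :
    |(2 * (Polynomial.Chebyshev.T ℝ l).eval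
          ((-2 * κ ^ 2 * x ^ 2 + κ ^ 2 + 1) / (κ ^ 2 - 1)) + 2) /
        ((Polynomial.Chebyshev.T ℝ l).eval ((κ ^ 2 + 1) / (κ ^ 2 - 1)) + 1) - 1| ≤ 1 := by
  obtain ⟨hx1, hx2⟩ := hx
  have hden : (0 : ℝ) < κ ^ 2 - 1 := by nlinarith
  set A : ℝ := (-2 * κ ^ 2 * x ^ 2 + κ ^ 2 + 1) / (κ ^ 2 - 1) with hA
  set B : ℝ := (κ ^ 2 + 1) / (κ ^ 2 - 1) with hB
  have hB1 : 1 ≤ B := by rw [hB, le_div_iff₀ hden]; nlinarith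
  have hAB : A ≤ B := by
    rw [hA, hB, div_le_div_iff₀ hden hden]
    nlinarith [mul_nonneg (sq_nonneg (κ * x)) hden.le]
  have hx2' : x ^ 2 ≤ 1 := by nlinarith
  have hAlo : -1 ≤ A := by
    rw [hA, le_div_iff₀ hden]
    nlinarith [mul_nonneg (sq_nonneg κ) (sub_nonneg.mpr hx2')]
  set y : ℝ := (Polynomial.Chebyshev.T ℝ l).eval A with hy
  set M : ℝ := (Polynomial.Chebyshev.T ℝ l).eval B with hM
  have hM1 : 1 ≤ M := (T_mono hB1 le_rfl l).1
  have hylo : -1 ≤ y := by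
    rcases le_or_gt A 1 with h1 | h1
    · have : A = Real.cos (Real.arccos A) := (Real.cos_arccos hAlo h1).symm
      rw [hy, this, Polynomial.Chebyshev.T_real_cos]
      exact Real.neg_one_le_cos _
    · linarith [(T_mono h1.le le_rfl l).1]
  have hyhi : y ≤ M := by
    rcases le_or_gt A 1 with h1 | h1
    · have : A = Real.cos (Real.arccos A) := (Real.cos_arccos hAlo h1).symm
      rw [hy, this, Polynomial.Chebyshev.T_real_cos]
      exact le_trans (Real.cos_le_one _) hM1
    · exact (T_mono h1.le hAB l).2
  have hMpos : 0 < M + 1 := by linarith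
  rw [abs_le]
  constructor
  · have : (0 : ℝ) ≤ (2 * y + 2) / (M + 1) := div_nonneg (by linarith) hMpos.le
    linarith
  · have : (2 * y + 2) / (M + 1) ≤ 2 := by
      rw [div_le_iff₀ hMpos]; linarith
    linarith
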